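/- Let C be an abelian monoidal category such that for every object U the functors U⊗− and −⊗U are additive and exact, and let f : (U, c) → (U', c') be a morphism in the Drinfeld center Z(C). Let κ : K → U be a kernel of f : U → U' in C and π : U' → Q a cokernel of f in C. Then there exist unique half-braidings 𝔎 on K and ℭ on Q such that κ : (K, 𝔎) → (U, c) and π : (U', c') → (Q, ℭ) are morphisms in Z(C), and with these structures κ is a kernel of f in Z(C) and π is a cokernel of f in Z(C). In particular the forgetful functor Z(C) → C, (U,c) ↦ U, is exact. -/

import Mathlib

open CategoryTheory Limits MonoidalCategory

universe v u

/-- Build an object of the Drinfeld center from an object and a half-braiding. -/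
def CategoryTheory.Center.mk' {C : Type u} [Category.{v} C] [MonoidalCategory C]
    (X : C) (b : HalfBraiding X) : Center C := ⟨X, b⟩

set_option linter.unusedSectionVars false
set_option maxHeartbeats 1000000

noncomputable section
namespace CenterProofAux

variable {C : Type u} [Category.{v} C] [MonoidalCategory C]

lemma halfBraiding_ext {Z : C} (b₁ b₂ : HalfBraiding Z)
    (h : ∀ V, (b₁.β V).hom = (b₂.β V).hom) : b₁ = b₂ := by
  obtain ⟨β₁, _, _⟩ := b₁
  obtain ⟨β₂, _, _⟩ := b₂
  obtain rfl : β₁ = β₂ := funext fun V => Iso.ext (h V)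
  rfl

/-! ### Generic computations with half-braidings -/

section Aux
variable {Z W : C}

lemma monoidal_aux (p : Z ⟶ W) (b : HalfBraiding W) {U U' : C}
    (hU : Z ⊗ U ⟶ U ⊗ Z) (hU' : Z ⊗ U' ⟶ U' ⊗ Z)
    (wU : hU ≫ (U ◁ p) = (p ▷ U) ≫ (b.β U).hom)
    (wU' : hU' ≫ (U' ◁ p) = (p ▷ U') ≫ (b.β U').hom) :
    ((α_ Z U U').inv ≫ (hU ▷ U') ≫ (α_ U Z U').hom ≫ (U ◁ hU') ≫ (α_ U U' Z).inv) ≫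
        ((U ⊗ U') ◁ p)
      = (p ▷ (U ⊗ U')) ≫ (b.β (U ⊗ U')).hom := by
  rw [b.monoidal]
  slice_lhs 5 6 => rw [← associator_inv_naturality_right]
  slice_lhs 4 5 => rw [← MonoidalCategory.whiskerLeft_comp, wU',
    MonoidalCategory.whiskerLeft_comp]
  slice_lhs 3 4 => rw [← associator_naturality_middle]
  slice_lhs 2 3 => rw [← comp_whiskerRight, wU, comp_whiskerRight]
  slice_lhs 1 2 => rw [← associator_inv_naturality_left]
  simp only [Category.assoc]

lemma monoidal_aux_co (p : W ⟶ Z) (b : HalfBraiding W) {U U' : C}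
    (hU : Z ⊗ U ⟶ U ⊗ Z) (hU' : Z ⊗ U' ⟶ U' ⊗ Z)
    (wU : (p ▷ U) ≫ hU = (b.β U).hom ≫ (U ◁ p))
    (wU' : (p ▷ U') ≫ hU' = (b.β U').hom ≫ (U' ◁ p)) :
    (p ▷ (U ⊗ U')) ≫
        ((α_ Z U U').inv ≫ (hU ▷ U') ≫ (α_ U Z U').hom ≫ (U ◁ hU') ≫ (α_ U U' Z).inv)
      = (b.β (U ⊗ U')).hom ≫ ((U ⊗ U') ◁ p) := by
  rw [b.monoidal]
  slice_lhs 1 2 => rw [associator_inv_naturality_left]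
  slice_lhs 2 3 => rw [← comp_whiskerRight, wU, comp_whiskerRight]
  slice_lhs 3 4 => rw [associator_naturality_middle]
  slice_lhs 4 5 => rw [← MonoidalCategory.whiskerLeft_comp, wU',
    MonoidalCategory.whiskerLeft_comp]
  slice_lhs 5 6 => rw [associator_inv_naturality_right]
  simp only [Category.assoc]

lemma naturality_aux (p : Z ⟶ W) (b : HalfBraiding W) {U U' : C} (g : U ⟶ U')
    (hU : Z ⊗ U ⟶ U ⊗ Z) (hU' : Z ⊗ U' ⟶ U' ⊗ Z)
    (wU : hU ≫ (U ◁ p) = (p ▷ U) ≫ (b.β U).hom)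
    (wU' : hU' ≫ (U' ◁ p) = (p ▷ U') ≫ (b.β U').hom) :
    ((Z ◁ g) ≫ hU') ≫ (U' ◁ p) = (hU ≫ (g ▷ Z)) ≫ (U' ◁ p) :=
  calc ((Z ◁ g) ≫ hU') ≫ (U' ◁ p)
      = (Z ◁ g) ≫ (p ▷ U') ≫ (b.β U').hom := by rw [Category.assoc, wU']
    _ = (p ▷ U) ≫ (W ◁ g) ≫ (b.β U').hom := by
        rw [← Category.assoc, whisker_exchange, Category.assoc]
    _ = (p ▷ U) ≫ (b.β U).hom ≫ (g ▷ W) := by rw [b.naturality]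
    _ = hU ≫ (U ◁ p) ≫ (g ▷ W) := by rw [← Category.assoc, ← wU, Category.assoc]
    _ = (hU ≫ (g ▷ Z)) ≫ (U' ◁ p) := by rw [whisker_exchange, Category.assoc]

lemma naturality_aux_co (p : W ⟶ Z) (b : HalfBraiding W) {U U' : C} (g : U ⟶ U')
    (hU : Z ⊗ U ⟶ U ⊗ Z) (hU' : Z ⊗ U' ⟶ U' ⊗ Z)
    (wU : (p ▷ U) ≫ hU = (b.β U).hom ≫ (U ◁ p))
    (wU' : (p ▷ U') ≫ hU' = (b.β U').hom ≫ (U' ◁ p)) :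
    (p ▷ U) ≫ ((Z ◁ g) ≫ hU') = (p ▷ U) ≫ (hU ≫ (g ▷ Z)) :=
  calc (p ▷ U) ≫ ((Z ◁ g) ≫ hU')
      = (W ◁ g) ≫ (p ▷ U') ≫ hU' := by
        rw [← Category.assoc, ← whisker_exchange, Category.assoc]
    _ = (W ◁ g) ≫ (b.β U').hom ≫ (U' ◁ p) := by rw [wU']
    _ = (b.β U).hom ≫ (g ▷ W) ≫ (U' ◁ p) := by
        rw [← Category.assoc, b.naturality, Category.assoc]
    _ = (b.β U).hom ≫ (U ◁ p) ≫ (g ▷ Z) := by rw [whisker_exchange]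
    _ = (p ▷ U) ≫ (hU ≫ (g ▷ Z)) := by
        rw [← Category.assoc, ← wU, Category.assoc]

lemma lift_comm_aux {T₀ : C} (bT : HalfBraiding T₀) (b : HalfBraiding W)
    (p : Z ⟶ W) (l : T₀ ⟶ Z) (gf : T₀ ⟶ W) (hl : l ≫ p = gf)
    (hg : ∀ V, (gf ▷ V) ≫ (b.β V).hom = (bT.β V).hom ≫ (V ◁ gf))
    (V : C) (hV : Z ⊗ V ⟶ V ⊗ Z)
    (wV : hV ≫ (V ◁ p) = (p ▷ V) ≫ (b.β V).hom) :
    ((l ▷ V) ≫ hV) ≫ (V ◁ p) = ((bT.β V).hom ≫ (V ◁ l)) ≫ (V ◁ p) := by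
  subst hl
  calc ((l ▷ V) ≫ hV) ≫ (V ◁ p)
      = (l ▷ V) ≫ (p ▷ V) ≫ (b.β V).hom := by rw [Category.assoc, wV]
    _ = ((l ≫ p) ▷ V) ≫ (b.β V).hom := by rw [comp_whiskerRight, Category.assoc]
    _ = (bT.β V).hom ≫ (V ◁ (l ≫ p)) := hg V
    _ = ((bT.β V).hom ≫ (V ◁ l)) ≫ (V ◁ p) := by
        rw [MonoidalCategory.whiskerLeft_comp, Category.assoc]

lemma desc_comm_aux {T₀ : C} (bT : HalfBraiding T₀) (b : HalfBraiding W)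
    (p : W ⟶ Z) (l : Z ⟶ T₀) (gf : W ⟶ T₀) (hl : p ≫ l = gf)
    (hg : ∀ V, (gf ▷ V) ≫ (bT.β V).hom = (b.β V).hom ≫ (V ◁ gf))
    (V : C) (hV : Z ⊗ V ⟶ V ⊗ Z)
    (wV : (p ▷ V) ≫ hV = (b.β V).hom ≫ (V ◁ p)) :
    (p ▷ V) ≫ ((l ▷ V) ≫ (bT.β V).hom) = (p ▷ V) ≫ (hV ≫ (V ◁ l)) := by
  subst hl
  calc (p ▷ V) ≫ ((l ▷ V) ≫ (bT.β V).hom)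
      = ((p ≫ l) ▷ V) ≫ (bT.β V).hom := by rw [comp_whiskerRight, Category.assoc]
    _ = (b.β V).hom ≫ (V ◁ (p ≫ l)) := hg V
    _ = ((b.β V).hom ≫ (V ◁ p)) ≫ (V ◁ l) := by
        rw [MonoidalCategory.whiskerLeft_comp, Category.assoc]
    _ = (p ▷ V) ≫ (hV ≫ (V ◁ l)) := by rw [← wV, Category.assoc]

end Aux

/-! ### Creation of limits and colimits by the forgetful functor -/

section Limits

variable {J : Type*} [Category J]
  [∀ U : C, PreservesLimitsOfShape J (tensorLeft U)]
  [∀ U : C, PreservesLimitsOfShape J (tensorRight U)]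
  (K : J ⥤ Center C)

def diagIso (V : C) :
    (K ⋙ Center.forget C) ⋙ tensorRight V ≅ (K ⋙ Center.forget C) ⋙ tensorLeft V :=
  NatIso.ofComponents (fun j => (K.obj j).2.β V) (fun φ => (K.map φ).comm V)

variable (c : Cone (K ⋙ Center.forget C)) (hc : IsLimit c)

def limitBraidingIso (V : C) : c.pt ⊗ V ≅ V ⊗ c.pt :=
  IsLimit.conePointsIsoOfNatIso (isLimitOfPreserves (tensorRight V) hc)
    (isLimitOfPreserves (tensorLeft V) hc) (diagIso K V)

lemma limitBraidingIso_comp (V : C) (j : J) :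
    (limitBraidingIso K c hc V).hom ≫ (V ◁ c.π.app j) =
      (c.π.app j ▷ V) ≫ ((K.obj j).2.β V).hom := by
  exact IsLimit.conePointsIsoOfNatIso_hom_comp
    (isLimitOfPreserves (tensorRight V) hc) (isLimitOfPreserves (tensorLeft V) hc)
    (diagIso K V) j

def limitBraiding : HalfBraiding c.pt where
  β V := limitBraidingIso K c hc V
  monoidal U U' := by
    refine (isLimitOfPreserves (tensorLeft (U ⊗ U')) hc).hom_ext fun j => ?_
    simpa using (limitBraidingIso_comp K c hc (U ⊗ U') j).trans
      (monoidal_aux (c.π.app j) (K.obj j).2 _ _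
        (limitBraidingIso_comp K c hc U j) (limitBraidingIso_comp K c hc U' j)).symm
  naturality {U U'} g := by
    refine (isLimitOfPreserves (tensorLeft U') hc).hom_ext fun j => ?_
    simpa using naturality_aux (c.π.app j) (K.obj j).2 g _ _
      (limitBraidingIso_comp K c hc U j) (limitBraidingIso_comp K c hc U' j)

def liftedCone : Cone K where
  pt := ⟨c.pt, limitBraiding K c hc⟩
  π :=
    { app := fun j =>
        { f := c.π.app j
          comm := fun V => (limitBraidingIso_comp K c hc V j).symm }
      naturality := fun j j' φ => by
        ext
        exact c.π.naturality φ }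

def liftedIsLimit : IsLimit (liftedCone K c hc) where
  lift s :=
    { f := hc.lift ((Center.forget C).mapCone s)
      comm := fun V => by
        refine (isLimitOfPreserves (tensorLeft V) hc).hom_ext fun j => ?_
        exact lift_comm_aux s.pt.2 (K.obj j).2 (c.π.app j)
          (hc.lift ((Center.forget C).mapCone s)) (s.π.app j).f
          (hc.fac ((Center.forget C).mapCone s) j) (s.π.app j).comm V
          (limitBraidingIso K c hc V).hom (limitBraidingIso_comp K c hc V j) }
  fac s j := by
    ext
    exact hc.fac ((Center.forget C).mapCone s) j
  uniq s m w := by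
    ext
    refine hc.uniq ((Center.forget C).mapCone s) m.f fun j => ?_
    exact congrArg Center.Hom.f (w j)

def createsLimitsOfShapeForget : CreatesLimitsOfShape J (Center.forget C) where
  CreatesLimit {K} := createsLimitOfReflectsIso fun c hc =>
    { liftedCone := liftedCone K c hc
      validLift := Cones.ext (Iso.refl _) fun j => by simp [liftedCone, Center.forget]
      makesLimit := liftedIsLimit K c hc }

end Limits

section Colimits

variable {J : Type*} [Category J]
  [∀ U : C, PreservesColimitsOfShape J (tensorLeft U)]
  [∀ U : C, PreservesColimitsOfShape J (tensorRight U)]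
  (K : J ⥤ Center C) (c : Cocone (K ⋙ Center.forget C)) (hc : IsColimit c)

def colimitBraidingIso (V : C) : c.pt ⊗ V ≅ V ⊗ c.pt :=
  IsColimit.coconePointsIsoOfNatIso (isColimitOfPreserves (tensorRight V) hc)
    (isColimitOfPreserves (tensorLeft V) hc) (diagIso K V)

lemma colimitBraidingIso_comp (V : C) (j : J) :
    (c.ι.app j ▷ V) ≫ (colimitBraidingIso K c hc V).hom =
      ((K.obj j).2.β V).hom ≫ (V ◁ c.ι.app j) := by
  exact IsColimit.comp_coconePointsIsoOfNatIso_hom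
    (isColimitOfPreserves (tensorRight V) hc) (isColimitOfPreserves (tensorLeft V) hc)
    (diagIso K V) j

def colimitBraiding : HalfBraiding c.pt where
  β V := colimitBraidingIso K c hc V
  monoidal U U' := by
    refine (isColimitOfPreserves (tensorRight (U ⊗ U')) hc).hom_ext fun j => ?_
    simpa using (colimitBraidingIso_comp K c hc (U ⊗ U') j).trans
      (monoidal_aux_co (c.ι.app j) (K.obj j).2 _ _
        (colimitBraidingIso_comp K c hc U j) (colimitBraidingIso_comp K c hc U' j)).symm
  naturality {U U'} g := by
    refine (isColimitOfPreserves (tensorRight U) hc).hom_ext fun j => ?_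
    simpa using naturality_aux_co (c.ι.app j) (K.obj j).2 g _ _
      (colimitBraidingIso_comp K c hc U j) (colimitBraidingIso_comp K c hc U' j)

def liftedCocone : Cocone K where
  pt := ⟨c.pt, colimitBraiding K c hc⟩
  ι :=
    { app := fun j =>
        { f := c.ι.app j
          comm := fun V => colimitBraidingIso_comp K c hc V j }
      naturality := fun j j' φ => by
        ext
        exact c.ι.naturality φ }

def liftedIsColimit : IsColimit (liftedCocone K c hc) where
  desc s :=
    { f := hc.desc ((Center.forget C).mapCocone s)
      comm := fun V => by
        refine (isColimitOfPreserves (tensorRight V) hc).hom_ext fun j => ?_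
        exact desc_comm_aux s.pt.2 (K.obj j).2 (c.ι.app j)
          (hc.desc ((Center.forget C).mapCocone s)) (s.ι.app j).f
          (hc.fac ((Center.forget C).mapCocone s) j) (s.ι.app j).comm V
          (colimitBraidingIso K c hc V).hom (colimitBraidingIso_comp K c hc V j) }
  fac s j := by
    ext
    exact hc.fac ((Center.forget C).mapCocone s) j
  uniq s m w := by
    ext
    refine hc.uniq ((Center.forget C).mapCocone s) m.f fun j => ?_
    exact congrArg Center.Hom.f (w j)

def createsColimitsOfShapeForget : CreatesColimitsOfShape J (Center.forget C) where
  CreatesColimit {K} := createsColimitOfReflectsIso fun c hc =>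
    { liftedCocone := liftedCocone K c hc
      validLift := Cocones.ext (Iso.refl _) fun j => by simp [liftedCocone, Center.forget]
      makesColimit := liftedIsColimit K c hc }

end Colimits

section Kernels

variable [Abelian C]
  [∀ U : C, (tensorLeft U).Additive] [∀ U : C, (tensorRight U).Additive]
  [∀ U : C, PreservesFiniteLimits (tensorLeft U)]
  [∀ U : C, PreservesFiniteColimits (tensorLeft U)]
  [∀ U : C, PreservesFiniteLimits (tensorRight U)]
  [∀ U : C, PreservesFiniteColimits (tensorRight U)]
  {X Y : Center C} (f : X ⟶ Y)

def kerL (V : C) :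
    IsLimit (KernelFork.ofι (V ◁ kernel.ι f.f)
      (by rw [← MonoidalCategory.whiskerLeft_comp, kernel.condition]
          exact (tensorLeft V).map_zero _ _) : KernelFork (V ◁ f.f)) :=
  isLimitOfHasKernelOfPreservesLimit (tensorLeft V) f.f

def kerR (V : C) :
    IsLimit (KernelFork.ofι (kernel.ι f.f ▷ V)
      (by rw [← comp_whiskerRight, kernel.condition]
          exact (tensorRight V).map_zero _ _) : KernelFork (f.f ▷ V)) :=
  isLimitOfHasKernelOfPreservesLimit (tensorRight V) f.f

lemma monoL (V : C) : Mono (V ◁ kernel.ι f.f) := mono_of_isLimit_fork (kerL f V)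
lemma monoR (V : C) : Mono (kernel.ι f.f ▷ V) := mono_of_isLimit_fork (kerR f V)

def kerLift (V : C) :=
  KernelFork.IsLimit.lift' (kerL f V) ((kernel.ι f.f ▷ V) ≫ (X.2.β V).hom)
    (by
      rw [Category.assoc, ← f.comm, ← comp_whiskerRight_assoc, kernel.condition]
      rw [show ((0 : kernel f.f ⟶ Y.1) ▷ V) = 0 from (tensorRight V).map_zero _ _, zero_comp])

def kerHom (V : C) : kernel f.f ⊗ V ⟶ V ⊗ kernel f.f := (kerLift f V).1

lemma kerHom_ι (V : C) :
    kerHom f V ≫ (V ◁ kernel.ι f.f) = (kernel.ι f.f ▷ V) ≫ (X.2.β V).hom := by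
  exact (kerLift f V).2

def kerInvLift (V : C) :=
  KernelFork.IsLimit.lift' (kerR f V) ((V ◁ kernel.ι f.f) ≫ (X.2.β V).inv)
    (by
      have h : (X.2.β V).inv ≫ (f.f ▷ V) = (V ◁ f.f) ≫ (Y.2.β V).inv := by
        rw [Iso.inv_comp_eq, ← Category.assoc, ← f.comm, Category.assoc, Iso.hom_inv_id, Category.comp_id]
      rw [Category.assoc, h, ← MonoidalCategory.whiskerLeft_comp_assoc, kernel.condition]
      rw [show (V ◁ (0 : kernel f.f ⟶ Y.1)) = 0 from (tensorLeft V).map_zero _ _, zero_comp])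

def kerInv (V : C) : V ⊗ kernel f.f ⟶ kernel f.f ⊗ V := (kerInvLift f V).1

lemma kerInv_ι (V : C) :
    kerInv f V ≫ (kernel.ι f.f ▷ V) = (V ◁ kernel.ι f.f) ≫ (X.2.β V).inv := by
  exact (kerInvLift f V).2

def kernelBraiding : HalfBraiding (kernel f.f) where
  β V :=
    { hom := kerHom f V
      inv := kerInv f V
      hom_inv_id := by
        haveI := monoR f V
        rw [← cancel_mono (kernel.ι f.f ▷ V), Category.assoc, kerInv_ι, ← Category.assoc,
          kerHom_ι, Category.assoc, Iso.hom_inv_id, Category.comp_id, Category.id_comp]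
      inv_hom_id := by
        haveI := monoL f V
        rw [← cancel_mono (V ◁ kernel.ι f.f), Category.assoc, kerHom_ι, ← Category.assoc,
          kerInv_ι, Category.assoc, Iso.inv_hom_id, Category.comp_id, Category.id_comp] }
  monoidal U U' := by
    haveI := monoL f (U ⊗ U')
    rw [← cancel_mono ((U ⊗ U') ◁ kernel.ι f.f)]
    exact (kerHom_ι f (U ⊗ U')).trans
      (monoidal_aux (kernel.ι f.f) X.2 _ _ (kerHom_ι f U) (kerHom_ι f U')).symm
  naturality {U U'} g := by
    haveI := monoL f U'
    rw [← cancel_mono (U' ◁ kernel.ι f.f)]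
    exact naturality_aux (kernel.ι f.f) X.2 g _ _ (kerHom_ι f U) (kerHom_ι f U')

@[simp] lemma kernelBraiding_β_hom (V : C) :
    ((kernelBraiding f).β V).hom = kerHom f V := rfl

def cokerL (V : C) :
    IsColimit (CokernelCofork.ofπ (V ◁ cokernel.π f.f)
      (by rw [← MonoidalCategory.whiskerLeft_comp, cokernel.condition]
          exact (tensorLeft V).map_zero _ _) : CokernelCofork (V ◁ f.f)) :=
  isColimitOfHasCokernelOfPreservesColimit (tensorLeft V) f.f

def cokerR (V : C) :
    IsColimit (CokernelCofork.ofπ (cokernel.π f.f ▷ V)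
      (by rw [← comp_whiskerRight, cokernel.condition]
          exact (tensorRight V).map_zero _ _) : CokernelCofork (f.f ▷ V)) :=
  isColimitOfHasCokernelOfPreservesColimit (tensorRight V) f.f

lemma epiL (V : C) : Epi (V ◁ cokernel.π f.f) := epi_of_isColimit_cofork (cokerL f V)
lemma epiR (V : C) : Epi (cokernel.π f.f ▷ V) := epi_of_isColimit_cofork (cokerR f V)

def cokerDesc (V : C) :=
  CokernelCofork.IsColimit.desc' (cokerR f V) ((Y.2.β V).hom ≫ (V ◁ cokernel.π f.f))
    (by
      rw [← Category.assoc, f.comm, Category.assoc, ← MonoidalCategory.whiskerLeft_comp,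
        cokernel.condition]
      rw [show (V ◁ (0 : X.1 ⟶ cokernel f.f)) = 0 from (tensorLeft V).map_zero _ _, comp_zero])

def cokerHom (V : C) : cokernel f.f ⊗ V ⟶ V ⊗ cokernel f.f := (cokerDesc f V).1

lemma π_cokerHom (V : C) :
    (cokernel.π f.f ▷ V) ≫ cokerHom f V = (Y.2.β V).hom ≫ (V ◁ cokernel.π f.f) := by
  exact (cokerDesc f V).2

def cokerInvDesc (V : C) :=
  CokernelCofork.IsColimit.desc' (cokerL f V) ((Y.2.β V).inv ≫ (cokernel.π f.f ▷ V))
    (by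
      have h : (V ◁ f.f) ≫ (Y.2.β V).inv = (X.2.β V).inv ≫ (f.f ▷ V) := by
        rw [Iso.comp_inv_eq, Category.assoc, f.comm, Iso.inv_hom_id_assoc]
      rw [← Category.assoc, h, Category.assoc, ← comp_whiskerRight, cokernel.condition]
      rw [show ((0 : X.1 ⟶ cokernel f.f) ▷ V) = 0 from (tensorRight V).map_zero _ _, comp_zero])

def cokerInv (V : C) : V ⊗ cokernel f.f ⟶ cokernel f.f ⊗ V := (cokerInvDesc f V).1

lemma π_cokerInv (V : C) :
    (V ◁ cokernel.π f.f) ≫ cokerInv f V = (Y.2.β V).inv ≫ (cokernel.π f.f ▷ V) := by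
  exact (cokerInvDesc f V).2

def cokernelBraiding : HalfBraiding (cokernel f.f) where
  β V :=
    { hom := cokerHom f V
      inv := cokerInv f V
      hom_inv_id := by
        haveI := epiR f V
        rw [← cancel_epi (cokernel.π f.f ▷ V), ← Category.assoc, π_cokerHom, Category.assoc,
          π_cokerInv, ← Category.assoc, Iso.hom_inv_id, Category.id_comp, Category.comp_id]
      inv_hom_id := by
        haveI := epiL f V
        rw [← cancel_epi (V ◁ cokernel.π f.f), ← Category.assoc, π_cokerInv, Category.assoc,
          π_cokerHom, ← Category.assoc, Iso.inv_hom_id, Category.id_comp, Category.comp_id] }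
  monoidal U U' := by
    haveI := epiR f (U ⊗ U')
    rw [← cancel_epi (cokernel.π f.f ▷ (U ⊗ U'))]
    exact (π_cokerHom f (U ⊗ U')).trans
      (monoidal_aux_co (cokernel.π f.f) Y.2 _ _ (π_cokerHom f U) (π_cokerHom f U')).symm
  naturality {U U'} g := by
    haveI := epiR f U
    rw [← cancel_epi (cokernel.π f.f ▷ U)]
    exact naturality_aux_co (cokernel.π f.f) Y.2 g _ _ (π_cokerHom f U) (π_cokerHom f U')

@[simp] lemma cokernelBraiding_β_hom (V : C) :
    ((cokernelBraiding f).β V).hom = cokerHom f V := rfl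

end Kernels

end CenterProofAux
end

open CenterProofAux in
/-- Let `C` be an abelian monoidal category in which the functors `U ⊗ -` and `- ⊗ U` are
additive and exact for every object `U`, and let `f : (U, c) ⟶ (U', c')` be a morphism in
the Drinfeld center `Z(C)`. Let `κ : K → U` be a kernel and `π : U' → Q` a cokernel of the
underlying morphism `f : U ⟶ U'` in `C`. Then there is a unique half-braiding `𝔎` on `K`
making `κ` a morphism in `Z(C)`, and a unique half-braiding `ℭ` on `Q` making `π` a
morphism in `Z(C)`; with these structures `κ` is a kernel and `π` is a cokernel of `f`
in `Z(C)`. In particular the forgetful functor `Z(C) → C` is exact. -/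
theorem center_kernel_cokernel (C : Type u) [Category.{v} C] [Abelian C]
    [MonoidalCategory C]
    [∀ U : C, (tensorLeft U).Additive] [∀ U : C, (tensorRight U).Additive]
    [∀ U : C, PreservesFiniteLimits (tensorLeft U)]
    [∀ U : C, PreservesFiniteColimits (tensorLeft U)]
    [∀ U : C, PreservesFiniteLimits (tensorRight U)]
    [∀ U : C, PreservesFiniteColimits (tensorRight U)]
    (X Y : Center C) (f : X ⟶ Y) :
    -- unique half-braiding on the kernel object making `kernel.ι` a morphism in the center
    (∃! 𝔎 : HalfBraiding (kernel f.f),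
      ∀ V : C, (kernel.ι f.f ▷ V) ≫ (X.2.β V).hom = (𝔎.β V).hom ≫ (V ◁ kernel.ι f.f)) ∧
    -- unique half-braiding on the cokernel object making `cokernel.π` a morphism in the center
    (∃! ℭ : HalfBraiding (cokernel f.f),
      ∀ V : C, (cokernel.π f.f ▷ V) ≫ (ℭ.β V).hom = (Y.2.β V).hom ≫ (V ◁ cokernel.π f.f)) ∧
    -- with this structure, `kernel.ι` is a kernel of `f` in the center
    (∀ (𝔎 : HalfBraiding (kernel f.f))
      (h𝔎 : ∀ V : C,
        (kernel.ι f.f ▷ V) ≫ (X.2.β V).hom = (𝔎.β V).hom ≫ (V ◁ kernel.ι f.f)),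
      ((⟨kernel.ι f.f, h𝔎⟩ : Center.mk' (kernel f.f) 𝔎 ⟶ X) ≫ f).f = 0 ∧
      ∀ (T : Center C) (g : T ⟶ X), g.f ≫ f.f = 0 →
        ∃! g' : T ⟶ Center.mk' (kernel f.f) 𝔎,
          g' ≫ (⟨kernel.ι f.f, h𝔎⟩ : Center.mk' (kernel f.f) 𝔎 ⟶ X) = g) ∧
    -- with this structure, `cokernel.π` is a cokernel of `f` in the center
    (∀ (ℭ : HalfBraiding (cokernel f.f))
      (hℭ : ∀ V : C,
        (cokernel.π f.f ▷ V) ≫ (ℭ.β V).hom = (Y.2.β V).hom ≫ (V ◁ cokernel.π f.f)),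
      (f ≫ (⟨cokernel.π f.f, hℭ⟩ : Y ⟶ Center.mk' (cokernel f.f) ℭ)).f = 0 ∧
      ∀ (T : Center C) (g : Y ⟶ T), f.f ≫ g.f = 0 →
        ∃! g' : Center.mk' (cokernel f.f) ℭ ⟶ T,
          (⟨cokernel.π f.f, hℭ⟩ : Y ⟶ Center.mk' (cokernel f.f) ℭ) ≫ g' = g) ∧
    -- in particular, the forgetful functor is exact
    PreservesFiniteLimits (Center.forget C) ∧ PreservesFiniteColimits (Center.forget C) := by
  refine ⟨?_, ?_, ?_, ?_, ?_, ?_⟩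
  · refine ⟨kernelBraiding f, fun V => (kerHom_ι f V).symm, fun b hb => ?_⟩
    refine halfBraiding_ext b _ fun V => ?_
    haveI := monoL f V
    rw [← cancel_mono (V ◁ kernel.ι f.f), kernelBraiding_β_hom, kerHom_ι f V, hb V]
  · refine ⟨cokernelBraiding f, fun V => π_cokerHom f V, fun b hb => ?_⟩
    refine halfBraiding_ext b _ fun V => ?_
    haveI := epiR f V
    rw [← cancel_epi (cokernel.π f.f ▷ V), cokernelBraiding_β_hom, π_cokerHom f V, hb V]
  · intro 𝔎 h𝔎
    refine ⟨kernel.condition f.f, fun T g hg => ?_⟩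
    refine ⟨⟨kernel.lift f.f g.f hg, fun V => ?_⟩, ?_, ?_⟩
    · haveI := monoL f V
      refine (cancel_mono (V ◁ kernel.ι f.f)).1 ?_
      exact lift_comm_aux T.2 X.2 (kernel.ι f.f) _ g.f
        (kernel.lift_ι f.f g.f hg) g.comm V (𝔎.β V).hom (h𝔎 V).symm
    · ext
      exact kernel.lift_ι f.f g.f hg
    · intro y hy
      ext
      refine (cancel_mono (kernel.ι f.f)).1 ?_
      exact (congrArg Center.Hom.f hy).trans (kernel.lift_ι f.f g.f hg).symm
  · intro ℭ hℭ
    refine ⟨cokernel.condition f.f, fun T g hg => ?_⟩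
    refine ⟨⟨cokernel.desc f.f g.f hg, fun V => ?_⟩, ?_, ?_⟩
    · haveI := epiR f V
      refine (cancel_epi (cokernel.π f.f ▷ V)).1 ?_
      exact desc_comm_aux T.2 Y.2 (cokernel.π f.f) _ g.f
        (cokernel.π_desc f.f g.f hg) g.comm V (ℭ.β V).hom (hℭ V)
    · ext
      exact cokernel.π_desc f.f g.f hg
    · intro y hy
      ext
      refine (cancel_epi (cokernel.π f.f)).1 ?_
      exact (congrArg Center.Hom.f hy).trans (cokernel.π_desc f.f g.f hg).symm
  · constructor
    intro J _ _
    haveI : CreatesLimitsOfShape J (Center.forget C) := createsLimitsOfShapeForget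
    infer_instance
  · constructor
    intro J _ _
    haveI : CreatesColimitsOfShape J (Center.forget C) := createsColimitsOfShapeForget
    infer_instance
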